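/- For a surjective function g : 𝒳 → 𝒴 with Y_k = g(X_k), the lumpability cost admits the representation and relaxation: C_L(X,g) = H(Y_2|Y_1) − H(Y_2|X_1) = I(Y_2; X_1 | Y_1) ≤ I(X_2; X_1 | Y_1) = I(X_1; X_2) − I(X_2; Y_1). -/

import Mathlib

open Filter Real

/-- Shannon entropy (base 2) of a finitely supported probability mass function. -/
noncomputable def ent {A : Type} [Fintype A] (q : A → ℝ) : ℝ :=
  - ∑ a, q a * Real.logb 2 (q a)

/-- Joint law of the first `n+1` samples of a Markov chain with initial distribution `μ`
and transition matrix `P`. -/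
noncomputable def chainJoint {X : Type} (μ : X → ℝ) (P : X → X → ℝ) (n : ℕ)
    (x : Fin (n + 1) → X) : ℝ :=
  μ (x 0) * ∏ i : Fin n, P (x i.castSucc) (x i.succ)

/-- Joint law of `(Y_1, …, Y_{n+1})`, where `Y` is the stationary process obtained by
observing the stationary Markov chain `X ~ (μ, P)` through the channel `W`. -/
noncomputable def obsJoint {X Y : Type} [Fintype X] (μ : X → ℝ) (P : X → X → ℝ)
    (W : X → Y → ℝ) (n : ℕ) (y : Fin (n + 1) → Y) : ℝ :=
  ∑ x : Fin (n + 1) → X, chainJoint μ P n x * ∏ i, W (x i) (y i)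

/-- A finite stochastic matrix is irreducible and aperiodic iff it is primitive, i.e., some
power (and hence all larger powers) of it is entrywise positive. -/
def IrreducibleAperiodic {X : Type} [Fintype X] [DecidableEq X] (P : Matrix X X ℝ) : Prop :=
  ∃ N : ℕ, ∀ n ≥ N, ∀ x x' : X, 0 < (P ^ n) x x'

section Defs

variable {X Y : Type} [Fintype X] [Fintype Y]

/-- Marginal distribution `ν` of each `Y_k`: `νᵀ = μᵀ W`. -/
noncomputable def nuDist (μ : X → ℝ) (W : X → Y → ℝ) : Y → ℝ := fun y => ∑ x, μ x * W x y

/-- Joint distribution of `(Y_1, Y_2)`. -/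
noncomputable def jointYY (μ : X → ℝ) (P : X → X → ℝ) (W : X → Y → ℝ) : Y × Y → ℝ :=
  fun p => ∑ x, ∑ x', μ x * W x p.1 * P x x' * W x' p.2

/-- Joint distribution of `(X_1, Y_2)`. -/
noncomputable def jointX1Y2 (μ : X → ℝ) (P : X → X → ℝ) (W : X → Y → ℝ) : X × Y → ℝ :=
  fun p => ∑ x', μ p.1 * P p.1 x' * W x' p.2

/-- Joint distribution of `(X_2, Y_1)`. -/
noncomputable def jointX2Y1 (μ : X → ℝ) (P : X → X → ℝ) (W : X → Y → ℝ) : X × Y → ℝ :=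
  fun p => ∑ x, μ x * W x p.2 * P x p.1

/-- Joint distribution of `(X_1, X_2)`. -/
noncomputable def jointXX (μ : X → ℝ) (P : X → X → ℝ) : X × X → ℝ :=
  fun p => μ p.1 * P p.1 p.2

/-- Joint distribution of `(X_1, Y_1)`. -/
noncomputable def jointX1Y1 (μ : X → ℝ) (W : X → Y → ℝ) : X × Y → ℝ :=
  fun p => μ p.1 * W p.1 p.2

/-- Joint distribution of `(X_2, Y_2)`. -/
noncomputable def jointX2Y2 (μ : X → ℝ) (P : X → X → ℝ) (W : X → Y → ℝ) : X × Y → ℝ :=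
  fun p => ∑ x, μ x * P x p.1 * W p.1 p.2

/-- Joint distribution of `(X_1, X_2, Y_2)`. -/
noncomputable def jointX1X2Y2 (μ : X → ℝ) (P : X → X → ℝ) (W : X → Y → ℝ) :
    X × X × Y → ℝ :=
  fun p => μ p.1 * P p.1 p.2.1 * W p.2.1 p.2.2

/-- Joint distribution of `(X_1, X_2, Y_1)`. -/
noncomputable def jointX1X2Y1 (μ : X → ℝ) (P : X → X → ℝ) (W : X → Y → ℝ) :
    X × X × Y → ℝ :=
  fun p => μ p.1 * W p.1 p.2.2 * P p.1 p.2.1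

/-- Joint distribution of `(X_1, Y_1, Y_2)`. -/
noncomputable def jointX1Y1Y2 (μ : X → ℝ) (P : X → X → ℝ) (W : X → Y → ℝ) :
    X × Y × Y → ℝ :=
  fun p => ∑ x', μ p.1 * W p.1 p.2.1 * P p.1 x' * W x' p.2.2

/-- Conditional entropy `H(Y_2 | Y_1) = H(Y_1, Y_2) − H(Y_1)`. -/
noncomputable def HY2gY1 (μ : X → ℝ) (P : X → X → ℝ) (W : X → Y → ℝ) : ℝ :=
  ent (jointYY μ P W) - ent (nuDist μ W)

/-- Conditional entropy `H(Y_2 | X_1) = H(X_1, Y_2) − H(X_1)`. -/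
noncomputable def HY2gX1 (μ : X → ℝ) (P : X → X → ℝ) (W : X → Y → ℝ) : ℝ :=
  ent (jointX1Y2 μ P W) - ent μ

/-- Conditional entropy `H(Y_1 | X_2) = H(X_2, Y_1) − H(X_2)`. -/
noncomputable def HY1gX2 (μ : X → ℝ) (P : X → X → ℝ) (W : X → Y → ℝ) : ℝ :=
  ent (jointX2Y1 μ P W) - ent μ

/-- Mutual information `I(X_1; X_2) = H(X_1) + H(X_2) − H(X_1, X_2)` (stationary case). -/
noncomputable def IX1X2 (μ : X → ℝ) (P : X → X → ℝ) : ℝ :=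
  2 * ent μ - ent (jointXX μ P)

/-- Mutual information `I(Y_1; Y_2) = H(Y_1) + H(Y_2) − H(Y_1, Y_2)` (stationary case). -/
noncomputable def IY1Y2 (μ : X → ℝ) (P : X → X → ℝ) (W : X → Y → ℝ) : ℝ :=
  2 * ent (nuDist μ W) - ent (jointYY μ P W)

/-- The lumpability cost `C_L(X, W) = H(Y_2|Y_1) − H(Y_2|X_1)`. -/
noncomputable def CL (μ : X → ℝ) (P : X → X → ℝ) (W : X → Y → ℝ) : ℝ :=
  HY2gY1 μ P W - HY2gX1 μ P W

/-- The predictability cost `C_P(X, W) = I(X_1;X_2) − I(Y_1;Y_2)`. -/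
noncomputable def CP (μ : X → ℝ) (P : X → X → ℝ) (W : X → Y → ℝ) : ℝ :=
  IX1X2 μ P - IY1Y2 μ P W

/-- The aggregation cost `C_β(X, W) = (1−2β)·C_L(X,W) + β·C_P(X,W)`. -/
noncomputable def Cbeta (μ : X → ℝ) (P : X → X → ℝ) (W : X → Y → ℝ) (β : ℝ) : ℝ :=
  (1 - 2 * β) * CL μ P W + β * CP μ P W

/-- `δ_β(X,W) = (1−β)·(H(Y_2|Y_1) − H̄(Y)) + β·(I(X_1;X_2) − H(Y_1) + H̄(Y))`, where `hbarY`
denotes the entropy rate `H̄(Y)`. -/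
noncomputable def deltaBeta (μ : X → ℝ) (P : X → X → ℝ) (W : X → Y → ℝ)
    (hbarY β : ℝ) : ℝ :=
  (1 - β) * (HY2gY1 μ P W - hbarY) + β * (IX1X2 μ P - ent (nuDist μ W) + hbarY)

/-- Conditional mutual information
`I(X_1; X_2 | Y_2) = H(X_1,Y_2) + H(X_2,Y_2) − H(X_1,X_2,Y_2) − H(Y_2)`. -/
noncomputable def IX1X2gY2 (μ : X → ℝ) (P : X → X → ℝ) (W : X → Y → ℝ) : ℝ :=
  ent (jointX1Y2 μ P W) + ent (jointX2Y2 μ P W) - ent (jointX1X2Y2 μ P W) -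
    ent (nuDist μ W)

/-- Conditional mutual information
`I(X_2; X_1 | Y_1) = H(X_1,Y_1) + H(X_2,Y_1) − H(X_1,X_2,Y_1) − H(Y_1)`. -/
noncomputable def IX2X1gY1 (μ : X → ℝ) (P : X → X → ℝ) (W : X → Y → ℝ) : ℝ :=
  ent (jointX1Y1 μ W) + ent (jointX2Y1 μ P W) - ent (jointX1X2Y1 μ P W) -
    ent (nuDist μ W)

/-- Conditional mutual information
`I(Y_2; X_1 | Y_1) = H(X_1,Y_1) + H(Y_1,Y_2) − H(X_1,Y_1,Y_2) − H(Y_1)`. -/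
noncomputable def IY2X1gY1 (μ : X → ℝ) (P : X → X → ℝ) (W : X → Y → ℝ) : ℝ :=
  ent (jointX1Y1 μ W) + ent (jointYY μ P W) - ent (jointX1Y1Y2 μ P W) -
    ent (nuDist μ W)

/-- Mutual information `I(X_2; Y_1) = H(X_2) + H(Y_1) − H(X_2, Y_1)`. -/
noncomputable def IX2Y1 (μ : X → ℝ) (P : X → X → ℝ) (W : X → Y → ℝ) : ℝ :=
  ent μ + ent (nuDist μ W) - ent (jointX2Y1 μ P W)

/-- The deterministic channel induced by an aggregation function `g : X → Y`:
`W_{x→y} = 1` iff `y = g x`. -/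
noncomputable def detW [DecidableEq Y] (g : X → Y) : X → Y → ℝ :=
  fun x y => if g x = y then 1 else 0

/-- The row-stochastic matrix `R = P·W` for a deterministic aggregation `g`:
`R_{x→y} = ∑_{x' : g x' = y} P_{x→x'}`. -/
noncomputable def Rmat [DecidableEq Y] (P : X → X → ℝ) (g : X → Y) : X → Y → ℝ :=
  fun x y => ∑ x', if g x' = y then P x x' else 0

/-- Kullback–Leibler divergence (base 2) between two probability mass functions on `Y`. -/
noncomputable def klDiv2 (p q : Y → ℝ) : ℝ :=
  ∑ y, p y * Real.logb 2 (p y / q y)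

end Defs

section Help
variable {A B : Type} [Fintype A] [Fintype B]

lemma ent_comp_equiv (e : A ≃ B) (f : B → ℝ) : ent (fun a => f (e a)) = ent f := by
  unfold ent
  rw [← Equiv.sum_comp e (fun b => f b * Real.logb 2 (f b))]

lemma ent_ite [DecidableEq B] (f : A × B → ℝ) (h : A → B) (f0 : A → ℝ)
    (hf : ∀ a b, f (a, b) = if h a = b then f0 a else 0) :
    ent f = ent f0 := by
  unfold ent
  rw [Fintype.sum_prod_type]
  congr 1
  apply Finset.sum_congr rfl
  intro a _
  have : ∀ b, f (a, b) * Real.logb 2 (f (a, b)) =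
      if h a = b then f0 a * Real.logb 2 (f0 a) else 0 := by
    intro b
    rw [hf]
    split <;> simp
  simp only [this, Finset.sum_ite_eq]
  simp

lemma sum_fiber [DecidableEq B] (h : A → B) (F : A → B → ℝ) :
    ∑ a, F a (h a) = ∑ b, ∑ a, if h a = b then F a b else 0 := by
  rw [Finset.sum_comm]
  simp [Finset.sum_ite_eq]

lemma sum_push [DecidableEq B] (h : A → B) (t : A → ℝ) (F : B → ℝ) :
    ∑ b, (∑ a, if h a = b then t a else 0) * F b = ∑ a, t a * F (h a) := by
  simp only [Finset.sum_mul, ite_mul, zero_mul]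
  rw [Finset.sum_comm]
  simp [Finset.sum_ite_eq]

end Help

lemma pointwise_log (a b c d : ℝ) (ha : 0 ≤ a) (hab : a ≤ b) (hac : a ≤ c) (had : a ≤ d)
    (hb : 0 ≤ b) (hc : 0 ≤ c) (hd : 0 ≤ d) :
    a * (Real.logb 2 b + Real.logb 2 c - Real.logb 2 a - Real.logb 2 d)
      ≤ ((if d = 0 then 0 else b * c / d) - a) / Real.log 2 := by
  have hlog2 : (0:ℝ) < Real.log 2 := Real.log_pos (by norm_num)
  rcases eq_or_lt_of_le ha with h | h
  · simp only [← h]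
    rw [zero_mul, sub_zero]
    apply div_nonneg _ hlog2.le
    split
    · norm_num
    · positivity
  · have hb' : 0 < b := lt_of_lt_of_le h hab
    have hc' : 0 < c := lt_of_lt_of_le h hac
    have hd' : 0 < d := lt_of_lt_of_le h had
    rw [if_neg hd'.ne']
    have key : Real.log (b * c / (a * d)) ≤ b * c / (a * d) - 1 :=
      Real.log_le_sub_one_of_pos (by positivity)
    have hexp : Real.log (b * c / (a * d)) =
        Real.log b + Real.log c - Real.log a - Real.log d := by
      rw [Real.log_div (by positivity) (by positivity), Real.log_mul hb'.ne' hc'.ne',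
        Real.log_mul h.ne' hd'.ne']
      ring
    have e1 : a * (b * c / (a * d)) = b * c / d := by
      field_simp
    have main : a * (Real.log b + Real.log c - Real.log a - Real.log d) ≤ b * c / d - a := by
      rw [← hexp]
      have h2 := mul_le_mul_of_nonneg_left key ha
      rw [mul_sub, e1, mul_one] at h2
      exact h2
    calc a * (Real.logb 2 b + Real.logb 2 c - Real.logb 2 a - Real.logb 2 d)
        = a * (Real.log b + Real.log c - Real.log a - Real.log d) / Real.log 2 := by
          simp only [Real.logb]; ring
      _ ≤ (b * c / d - a) / Real.log 2 := by gcongr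

lemma core_ineq {X Y : Type} [Fintype X] [Fintype Y] [DecidableEq Y] (g : X → Y)
    (a : X → X → ℝ) (b : X → Y → ℝ) (c : X → Y → ℝ) (d : Y → Y → ℝ)
    (ha0 : ∀ x x', 0 ≤ a x x') (ha1 : ∑ x, ∑ x', a x x' = 1)
    (hb : ∀ x' y, b x' y = ∑ x, if g x = y then a x x' else 0)
    (hc : ∀ x y', c x y' = ∑ x', if g x' = y' then a x x' else 0)
    (hd : ∀ y y', d y y' = ∑ x, if g x = y then c x y' else 0)
    (hd' : ∀ y y', d y y' = ∑ x', if g x' = y' then b x' y else 0) :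
    (∑ x', ∑ y, b x' y * Real.logb 2 (b x' y)) + (∑ x, ∑ y', c x y' * Real.logb 2 (c x y'))
      ≤ (∑ x, ∑ x', a x x' * Real.logb 2 (a x x'))
        + (∑ y, ∑ y', d y y' * Real.logb 2 (d y y')) := by
  have hlog2 : (0:ℝ) < Real.log 2 := Real.log_pos (by norm_num)
  have hb0 : ∀ x' y, 0 ≤ b x' y := by
    intro x' y; rw [hb]
    apply Finset.sum_nonneg
    intro x _
    split
    · exact ha0 x x'
    · exact le_rfl
  have hc0 : ∀ x y', 0 ≤ c x y' := by
    intro x y'; rw [hc]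
    apply Finset.sum_nonneg
    intro x' _
    split
    · exact ha0 x x'
    · exact le_rfl
  have hd0 : ∀ y y', 0 ≤ d y y' := by
    intro y y'; rw [hd]
    apply Finset.sum_nonneg
    intro x _
    split
    · exact hc0 x y'
    · exact le_rfl
  have hab : ∀ x x', a x x' ≤ b x' (g x) := by
    intro x x'; rw [hb]
    have h1 : ∀ x0 ∈ Finset.univ, (0:ℝ) ≤ if g x0 = g x then a x0 x' else 0 := by
      intro x0 _
      split
      · exact ha0 x0 x'
      · exact le_rfl
    have := Finset.single_le_sum h1 (Finset.mem_univ x)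
    simpa using this
  have hac : ∀ x x', a x x' ≤ c x (g x') := by
    intro x x'; rw [hc]
    have h1 : ∀ x0 ∈ Finset.univ, (0:ℝ) ≤ if g x0 = g x' then a x x0 else 0 := by
      intro x0 _
      split
      · exact ha0 x x0
      · exact le_rfl
    have := Finset.single_le_sum h1 (Finset.mem_univ x')
    simpa using this
  have had : ∀ x x', a x x' ≤ d (g x) (g x') := by
    intro x x'
    refine le_trans (hac x x') ?_
    rw [hd]
    have h1 : ∀ x0 ∈ Finset.univ, (0:ℝ) ≤ if g x0 = g x then c x0 (g x') else 0 := by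
      intro x0 _
      split
      · exact hc0 x0 (g x')
      · exact le_rfl
    have := Finset.single_le_sum h1 (Finset.mem_univ x)
    simpa using this
  -- rewrite the four entropy-type sums as sums against a
  have Eb : ∑ x', ∑ y, b x' y * Real.logb 2 (b x' y)
      = ∑ x, ∑ x', a x x' * Real.logb 2 (b x' (g x)) := by
    have h1 : ∀ x', ∑ y, b x' y * Real.logb 2 (b x' y)
        = ∑ x, a x x' * Real.logb 2 (b x' (g x)) := by
      intro x'
      rw [show ∑ y, b x' y * Real.logb 2 (b x' y)
          = ∑ y, (∑ x, if g x = y then a x x' else 0) * Real.logb 2 (b x' y) from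
        Finset.sum_congr rfl fun y _ => by rw [← hb]]
      exact sum_push g (fun x => a x x') (fun y => Real.logb 2 (b x' y))
    simp_rw [h1]
    exact Finset.sum_comm
  have Ec : ∑ x, ∑ y', c x y' * Real.logb 2 (c x y')
      = ∑ x, ∑ x', a x x' * Real.logb 2 (c x (g x')) := by
    apply Finset.sum_congr rfl
    intro x _
    rw [show ∑ y', c x y' * Real.logb 2 (c x y')
        = ∑ y', (∑ x', if g x' = y' then a x x' else 0) * Real.logb 2 (c x y') from
      Finset.sum_congr rfl fun y' _ => by rw [← hc]]
    exact sum_push g (fun x' => a x x') (fun y' => Real.logb 2 (c x y'))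
  have Ed : ∑ y, ∑ y', d y y' * Real.logb 2 (d y y')
      = ∑ x, ∑ x', a x x' * Real.logb 2 (d (g x) (g x')) := by
    have h1 : ∀ y', ∑ y, d y y' * Real.logb 2 (d y y')
        = ∑ x, c x y' * Real.logb 2 (d (g x) y') := by
      intro y'
      rw [show ∑ y, d y y' * Real.logb 2 (d y y')
          = ∑ y, (∑ x, if g x = y then c x y' else 0) * Real.logb 2 (d y y') from
        Finset.sum_congr rfl fun y _ => by rw [← hd]]
      exact sum_push g (fun x => c x y') (fun y => Real.logb 2 (d y y'))
    have h2 : ∀ x, ∑ y', c x y' * Real.logb 2 (d (g x) y')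
        = ∑ x', a x x' * Real.logb 2 (d (g x) (g x')) := by
      intro x
      rw [show ∑ y', c x y' * Real.logb 2 (d (g x) y')
          = ∑ y', (∑ x', if g x' = y' then a x x' else 0) * Real.logb 2 (d (g x) y') from
        Finset.sum_congr rfl fun y' _ => by rw [← hc]]
      exact sum_push g (fun x' => a x x') (fun y' => Real.logb 2 (d (g x) y'))
    calc ∑ y, ∑ y', d y y' * Real.logb 2 (d y y')
        = ∑ y', ∑ y, d y y' * Real.logb 2 (d y y') := Finset.sum_comm
      _ = ∑ y', ∑ x, c x y' * Real.logb 2 (d (g x) y') := by simp_rw [h1]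
      _ = ∑ x, ∑ y', c x y' * Real.logb 2 (d (g x) y') := Finset.sum_comm
      _ = ∑ x, ∑ x', a x x' * Real.logb 2 (d (g x) (g x')) := by simp_rw [h2]
  -- define the comparison function q and prove its sum is at most 1
  set q : X → X → ℝ := fun x x' =>
    if d (g x) (g x') = 0 then 0 else b x' (g x) * c x (g x') / d (g x) (g x') with hqdef
  have hsd : ∑ y, ∑ y', d y y' = 1 := by
    have h1 : ∀ y', ∑ y, d y y' = ∑ x, c x y' := by
      intro y'
      simp_rw [hd]
      rw [Finset.sum_comm]
      simp [Finset.sum_ite_eq]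
    have h2 : ∀ x, ∑ y', c x y' = ∑ x', a x x' := by
      intro x
      simp_rw [hc]
      rw [Finset.sum_comm]
      simp [Finset.sum_ite_eq]
    calc ∑ y, ∑ y', d y y' = ∑ y', ∑ y, d y y' := Finset.sum_comm
      _ = ∑ y', ∑ x, c x y' := by simp_rw [h1]
      _ = ∑ x, ∑ y', c x y' := Finset.sum_comm
      _ = ∑ x, ∑ x', a x x' := by simp_rw [h2]
      _ = 1 := ha1
  have hq1 : ∑ x, ∑ x', q x x' ≤ 1 := by
    have key := sum_fiber (fun p : X × X => (g p.1, g p.2))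
      (fun p s => if d s.1 s.2 = 0 then 0 else b p.2 s.1 * c p.1 s.2 / d s.1 s.2)
    simp only at key
    rw [Fintype.sum_prod_type] at key
    have lhs_eq : ∑ x, ∑ x', q x x'
        = ∑ x, ∑ x', if d (g x) (g x') = 0 then 0
            else b x' (g x) * c x (g x') / d (g x) (g x') := by
      simp [hqdef]
    rw [lhs_eq, key, ← hsd]
    have rhs_eq : (∑ s : Y × Y, ∑ p : X × X,
        if (g p.1, g p.2) = s then
          (if d s.1 s.2 = 0 then 0 else b p.2 s.1 * c p.1 s.2 / d s.1 s.2) else 0)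
        = ∑ y, ∑ y', ∑ p : X × X,
        if (g p.1, g p.2) = (y, y') then
          (if d y y' = 0 then 0 else b p.2 y * c p.1 y' / d y y') else 0 := by
      rw [Fintype.sum_prod_type]
    rw [rhs_eq]
    apply Finset.sum_le_sum
    intro y _
    apply Finset.sum_le_sum
    intro y' _
    by_cases hdz : d y y' = 0
    · simp [hdz, hd0 y y']
    · have inner_eq : (∑ p : X × X,
          if (g p.1, g p.2) = (y, y') then
            (if d y y' = 0 then 0 else b p.2 y * c p.1 y' / d y y') else 0)
          = (∑ x, if g x = y then c x y' else 0)
            * (∑ x', if g x' = y' then b x' y else 0) / d y y' := by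
        rw [Fintype.sum_prod_type, Finset.sum_mul_sum, Finset.sum_div]
        apply Finset.sum_congr rfl
        intro x _
        rw [Finset.sum_div]
        apply Finset.sum_congr rfl
        intro x' _
        simp only [if_neg hdz, Prod.mk.injEq, ite_and]
        by_cases h1 : g x = y <;> by_cases h2 : g x' = y' <;>
          simp [h1, h2, mul_comm]
      have : (∑ p : X × X,
          if (g p.1, g p.2) = (y, y') then
            (if d y y' = 0 then 0 else b p.2 y * c p.1 y' / d y y') else 0) = d y y' := by
        rw [inner_eq, ← hd y y', ← hd' y y']
        field_simp
      exact le_of_eq this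
  -- pointwise bound and summation
  have point : ∀ x x',
      a x x' * (Real.logb 2 (b x' (g x)) + Real.logb 2 (c x (g x'))
        - Real.logb 2 (a x x') - Real.logb 2 (d (g x) (g x')))
      ≤ (q x x' - a x x') / Real.log 2 := by
    intro x x'
    exact pointwise_log (a x x') (b x' (g x)) (c x (g x')) (d (g x) (g x'))
      (ha0 x x') (hab x x') (hac x x') (had x x')
      (hb0 x' (g x)) (hc0 x (g x')) (hd0 (g x) (g x'))
  have sum_point : ∑ x, ∑ x', a x x' * (Real.logb 2 (b x' (g x)) + Real.logb 2 (c x (g x'))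
        - Real.logb 2 (a x x') - Real.logb 2 (d (g x) (g x')))
      ≤ ∑ x, ∑ x', (q x x' - a x x') / Real.log 2 := by
    apply Finset.sum_le_sum
    intro x _
    exact Finset.sum_le_sum fun x' _ => point x x'
  have rhs_le : ∑ x, ∑ x', (q x x' - a x x') / Real.log 2 ≤ 0 := by
    have : ∑ x, ∑ x', (q x x' - a x x') / Real.log 2
        = ((∑ x, ∑ x', q x x') - (∑ x, ∑ x', a x x')) / Real.log 2 := by
      simp [Finset.sum_sub_distrib, Finset.sum_div, sub_div]
    rw [this, ha1]
    apply div_nonpos_of_nonpos_of_nonneg _ hlog2.le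
    linarith
  have expand : ∑ x, ∑ x', a x x' * (Real.logb 2 (b x' (g x)) + Real.logb 2 (c x (g x'))
        - Real.logb 2 (a x x') - Real.logb 2 (d (g x) (g x')))
      = (∑ x, ∑ x', a x x' * Real.logb 2 (b x' (g x)))
        + (∑ x, ∑ x', a x x' * Real.logb 2 (c x (g x')))
        - (∑ x, ∑ x', a x x' * Real.logb 2 (a x x'))
        - (∑ x, ∑ x', a x x' * Real.logb 2 (d (g x) (g x'))) := by
    simp [mul_add, mul_sub, Finset.sum_add_distrib, Finset.sum_sub_distrib]
  rw [Eb, Ec, Ed]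
  linarith [le_trans sum_point rhs_le, expand.symm.le, expand.le]

section MainProof

variable {X Y : Type} [Fintype X] [Fintype Y] [DecidableEq X] [DecidableEq Y]

lemma ent_jointX1Y1_det (μ : X → ℝ) (g : X → Y) :
    ent (jointX1Y1 μ (detW g)) = ent μ := by
  apply ent_ite _ g μ
  intro a b
  simp only [jointX1Y1, detW]
  split <;> simp

def eqvXYY {X Y : Type} : (X × Y) × Y ≃ X × Y × Y :=
  ⟨fun p => (p.1.1, p.2, p.1.2), fun p => ((p.1, p.2.2), p.2.1),
    fun _ => rfl, fun _ => rfl⟩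

def eqvXXY {X Y : Type} : (X × X) × Y ≃ X × X × Y :=
  ⟨fun p => (p.1.1, p.1.2, p.2), fun p => ((p.1, p.2.1), p.2.2),
    fun _ => rfl, fun _ => rfl⟩

lemma ent_jointX1Y1Y2_det (μ : X → ℝ) (P : X → X → ℝ) (g : X → Y) :
    ent (jointX1Y1Y2 μ P (detW g)) = ent (jointX1Y2 μ P (detW g)) := by
  rw [← ent_comp_equiv (eqvXYY (X := X) (Y := Y)) (jointX1Y1Y2 μ P (detW g))]
  apply ent_ite _ (fun p : X × Y => g p.1) (jointX1Y2 μ P (detW g))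
  rintro ⟨x, y'⟩ y
  simp only [jointX1Y1Y2, jointX1Y2, detW, eqvXYY, Equiv.coe_fn_mk]
  by_cases h : g x = y <;> simp [h, mul_assoc]
  exact Finset.sum_congr rfl fun x' _ => by split <;> simp [*]

lemma ent_jointX1X2Y1_det (μ : X → ℝ) (P : X → X → ℝ) (g : X → Y) :
    ent (jointX1X2Y1 μ P (detW g)) = ent (jointXX μ P) := by
  rw [← ent_comp_equiv (eqvXXY (X := X) (Y := Y)) (jointX1X2Y1 μ P (detW g))]
  apply ent_ite _ (fun p : X × X => g p.1) (jointXX μ P)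
  rintro ⟨x, x'⟩ y
  simp only [jointX1X2Y1, jointXX, detW, eqvXXY, Equiv.coe_fn_mk]
  by_cases h : g x = y <;> simp [h, mul_comm, mul_assoc]

end MainProof

/-- For a surjective deterministic aggregation `g` with `Y_k = g(X_k)`,
the lumpability cost admits the representation and relaxation:
`C_L(X,g) = H(Y_2|Y_1) − H(Y_2|X_1) = I(Y_2;X_1|Y_1) ≤ I(X_2;X_1|Y_1)
 = I(X_1;X_2) − I(X_2;Y_1)`. -/
theorem CL_relaxation
    {X Y : Type} [Fintype X] [Fintype Y] [Nonempty X] [Nonempty Y]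
    [DecidableEq X] [DecidableEq Y]
    (μ : X → ℝ) (P : X → X → ℝ) (g : X → Y) (hg : Function.Surjective g)
    (hμ0 : ∀ x, 0 ≤ μ x) (hμ1 : ∑ x, μ x = 1)
    (hP0 : ∀ x x', 0 ≤ P x x') (hP1 : ∀ x, ∑ x', P x x' = 1)
    (hinv : ∀ x', ∑ x, μ x * P x x' = μ x')
    (hirr : IrreducibleAperiodic (Matrix.of fun a b => P a b))
    : CL μ P (detW g) = IY2X1gY1 μ P (detW g) ∧
      IY2X1gY1 μ P (detW g) ≤ IX2X1gY1 μ P (detW g) ∧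
      IX2X1gY1 μ P (detW g) = IX1X2 μ P - IX2Y1 μ P (detW g) := by
  have e1 : ent (jointX1Y1 μ (detW g)) = ent μ := ent_jointX1Y1_det μ g
  have e2 : ent (jointX1Y1Y2 μ P (detW g)) = ent (jointX1Y2 μ P (detW g)) :=
    ent_jointX1Y1Y2_det μ P g
  have e3 : ent (jointX1X2Y1 μ P (detW g)) = ent (jointXX μ P) :=
    ent_jointX1X2Y1_det μ P g
  refine ⟨?_, ?_, ?_⟩
  · unfold CL HY2gY1 HY2gX1 IY2X1gY1
    rw [e1, e2]
    ring
  · unfold IY2X1gY1 IX2X1gY1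
    rw [e2, e3]
    have core := core_ineq g (fun x x' => μ x * P x x')
      (fun x' y => jointX2Y1 μ P (detW g) (x', y))
      (fun x y' => jointX1Y2 μ P (detW g) (x, y'))
      (fun y y' => jointYY μ P (detW g) (y, y'))
      (fun x x' => mul_nonneg (hμ0 x) (hP0 x x'))
      (by simp [← Finset.mul_sum, hP1, hμ1])
      (by
        intro x' y
        simp only [jointX2Y1, detW]
        apply Finset.sum_congr rfl
        intro x _
        split <;> simp)
      (by
        intro x y'
        simp only [jointX1Y2, detW]
        apply Finset.sum_congr rfl
        intro x' _
        split <;> simp)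
      (by
        intro y y'
        simp only [jointYY, jointX1Y2, detW]
        apply Finset.sum_congr rfl
        intro x _
        split <;> simp)
      (by
        intro y y'
        simp only [jointYY, jointX2Y1, detW]
        rw [Finset.sum_comm]
        apply Finset.sum_congr rfl
        intro x' _
        split <;> simp)
    have F1 : ent (jointX2Y1 μ P (detW g))
        = -∑ x', ∑ y, jointX2Y1 μ P (detW g) (x', y)
            * Real.logb 2 (jointX2Y1 μ P (detW g) (x', y)) := by
      unfold ent; rw [Fintype.sum_prod_type]
    have F2 : ent (jointX1Y2 μ P (detW g))
        = -∑ x, ∑ y', jointX1Y2 μ P (detW g) (x, y')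
            * Real.logb 2 (jointX1Y2 μ P (detW g) (x, y')) := by
      unfold ent; rw [Fintype.sum_prod_type]
    have F3 : ent (jointXX μ P)
        = -∑ x, ∑ x', (μ x * P x x') * Real.logb 2 (μ x * P x x') := by
      unfold ent jointXX; rw [Fintype.sum_prod_type]
    have F4 : ent (jointYY μ P (detW g))
        = -∑ y, ∑ y', jointYY μ P (detW g) (y, y')
            * Real.logb 2 (jointYY μ P (detW g) (y, y')) := by
      unfold ent; rw [Fintype.sum_prod_type]
    rw [F1, F2, F3, F4]
    linarith [core]
  · unfold IX2X1gY1 IX1X2 IX2Y1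
    rw [e1, e3]
    ring
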